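/- Let z ∈ ℂ with |z| > 1 and n ≥ 2, and let K ⊆ ℂ be the unique nonempty compact set with z·K = ⋃_{i=0}^{n-1} (K + i). Then x₀ = (n−1)/(2(z−1)) is a center of symmetry of K: 2x₀ − K = K. -/

import Mathlib

open EMetric Set
open scoped ENNReal NNReal

lemma attractor_unique {ι : Type*} [Nonempty ι] (g : ι → ℂ → ℂ) (r : ℝ≥0∞) (hr : r < 1)
    (hg : ∀ i x y, edist (g i x) (g i y) = r * edist x y)
    (A B : Set ℂ) (hA : A.Nonempty) (hB : B.Nonempty) (hAc : IsCompact A) (hBc : IsCompact B)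
    (heqA : A = ⋃ i, g i '' A) (heqB : B = ⋃ i, g i '' B) : A = B := by
  set d := hausdorffEdist A B with hd
  have hdtop : d ≠ ⊤ :=
    Metric.hausdorffEdist_ne_top_of_nonempty_of_bounded hA hB hAc.isBounded hBc.isBounded
  have key : d ≤ r * d := by
    have h1 : ∀ (S T : Set ℂ), IsCompact T → T.Nonempty →
        ∀ x ∈ ⋃ i, g i '' S, infEdist x (⋃ i, g i '' T) ≤ r * hausdorffEdist S T := by
      intro S T hTc hTne x hx
      obtain ⟨i, a, ha, rfl⟩ := by simpa using hx
      obtain ⟨b, hb, hab⟩ := hTc.exists_infEdist_eq_edist hTne a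
      calc infEdist (g i a) (⋃ i, g i '' T) ≤ infEdist (g i a) (g i '' T) :=
            infEdist_anti (subset_iUnion (fun i => g i '' T) i)
        _ ≤ edist (g i a) (g i b) := infEdist_le_edist_of_mem (mem_image_of_mem _ hb)
        _ = r * edist a b := hg i a b
        _ = r * infEdist a T := by rw [← hab]; rfl
        _ ≤ r * hausdorffEdist S T := by
            exact mul_le_mul_right (infEdist_le_hausdorffEdist_of_mem ha) r
    have : hausdorffEdist (⋃ i, g i '' A) (⋃ i, g i '' B) ≤ r * d := by
      refine hausdorffEdist_le_of_infEdist (fun x hx => h1 A B hBc hB x hx) (fun x hx => ?_)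
      have := h1 B A hAc hA x hx
      rw [show hausdorffEdist B A = hausdorffEdist A B from Metric.hausdorffEDist_comm] at this; exact this
    calc d = hausdorffEdist (⋃ i, g i '' A) (⋃ i, g i '' B) := by
          rw [hd]; exact congrArg₂ hausdorffEdist heqA heqB
      _ ≤ r * d := this
  have hd0 : d = 0 := by
    by_contra h0
    have : r * d < 1 * d := by rw [mul_comm r, mul_comm 1]; exact ENNReal.mul_lt_mul_right h0 hdtop hr
    rw [one_mul] at this
    exact absurd key (not_le.mpr this)
  exact (hausdorffEdist_zero_iff_eq_of_closed hAc.isClosed hBc.isClosed).mp hd0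

theorem attractor_symmetry_center {n : ℕ} (hn : 2 ≤ n)
    (z : ℂ) (hz : 1 < ‖z‖)
    (K : Set ℂ) (hK : K.Nonempty) (hKc : IsCompact K)
    (hself : (fun w => z * w) '' K = ⋃ i : Fin n, (fun k => k + (i : ℂ)) '' K) :
    (fun k => 2 * ((n - 1 : ℂ) / (2 * (z - 1))) - k) '' K = K := by
  have hz0 : z ≠ 0 := by
    intro h; rw [h] at hz; simp at hz; linarith
  have hz1 : z - 1 ≠ 0 := by
    intro h
    have : z = 1 := by linear_combination h
    rw [this] at hz; simp at hz
  set c : ℂ := 2 * ((n - 1 : ℂ) / (2 * (z - 1))) with hc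
  have hzc : z * c = c + (n - 1) := by
    rw [hc]; field_simp; ring
  set g : Fin n → ℂ → ℂ := fun i w => z⁻¹ * (w + (i : ℂ)) with hgdef
  -- K is the attractor
  have hKeq : K = ⋃ i : Fin n, g i '' K := by
    have h := congrArg (Set.image fun w => z⁻¹ * w) hself
    simp only [Set.image_image, Set.image_iUnion] at h
    simp only [inv_mul_cancel_left₀ hz0, Set.image_id'] at h
    simpa only [hgdef] using h
  set σ : ℂ → ℂ := fun k => c - k with hσ
  set K' : Set ℂ := σ '' K with hK'
  -- conjugation identity
  have hconj : ∀ (j : Fin n) (k : ℂ), σ (g j k) = g j.rev (σ k) := by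
    intro j k
    have hjle : (j : ℕ) ≤ n - 1 := Nat.le_sub_one_of_lt j.isLt
    have hrev : ((j.rev : Fin n) : ℂ) = (n : ℂ) - 1 - (j : ℂ) := by
      have : (j.rev : ℕ) = n - 1 - j := by
        rw [Fin.val_rev]; omega
      rw [this]
      have h1 : (1 : ℕ) ≤ n := by omega
      push_cast [Nat.cast_sub hjle, Nat.cast_sub h1]
      ring
    simp only [hσ, hgdef, hrev]
    calc c - z⁻¹ * (k + (j : ℂ)) = z⁻¹ * (z * c - (k + (j:ℂ))) := by
          rw [mul_sub, inv_mul_cancel_left₀ hz0]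
      _ = z⁻¹ * (c - k + ((n:ℂ) - 1 - (j:ℂ))) := by rw [hzc]; ring_nf
  have hK'eq : K' = ⋃ i : Fin n, g i '' K' := by
    calc K' = σ '' (⋃ j : Fin n, g j '' K) := by rw [← hKeq]
      _ = ⋃ j : Fin n, σ '' (g j '' K) := by rw [Set.image_iUnion]
      _ = ⋃ j : Fin n, g j.rev '' (σ '' K) := by
          refine iUnion_congr fun j => ?_
          rw [Set.image_image, Set.image_image]
          exact Set.image_congr fun k _ => hconj j k
      _ = ⋃ i : Fin n, g i '' K' := by
          rw [← hK']
          ext x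
          simp only [Set.mem_iUnion]
          constructor
          · rintro ⟨j, h⟩; exact ⟨j.rev, h⟩
          · rintro ⟨i, h⟩; exact ⟨i.rev, by simpa [Fin.rev_rev] using h⟩
  -- similarity ratio
  set r : ℝ≥0∞ := (‖z⁻¹‖₊ : ℝ≥0∞) with hr
  have hrlt : r < 1 := by
    have h1 : (1:ℝ) < ‖z‖ := by exact hz
    have h2 : ‖z⁻¹‖ < 1 := by
      rw [norm_inv]
      exact inv_lt_one_of_one_lt₀ h1
    rw [hr]
    exact_mod_cast h2
  have hg : ∀ (i : Fin n) (x y : ℂ), edist (g i x) (g i y) = r * edist x y := by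
    intro i x y
    simp only [hgdef, edist_nndist, nndist_eq_nnnorm, hr]
    rw [← ENNReal.coe_mul]
    congr 1
    rw [← nnnorm_mul]
    congr 1
    ring
  have : Nonempty (Fin n) := ⟨⟨0, by omega⟩⟩
  have hσcont : Continuous σ := by
    simp only [hσ]; exact continuous_const.sub continuous_id
  exact attractor_unique g r hrlt hg K' K (hK.image σ) hK (hKc.image hσcont) hKc hK'eq hKeq
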